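/- Assume p is odd and let g = h^{(q−1)/2}·b. Then the centralizer of g in N equals the subgroup of N generated by g and h^{q+1}, the conjugacy class of g in N has exactly q+1 elements, and this conjugacy class is precisely the set of elements of order 4 in the coset ⟨h⟩b. -/
import Mathlib

theorem singer_aux (q : ℕ) (hq3 : 3 ≤ q) (hqodd : Odd q)
    (G : Type) [Group G] (h b : G)
    (hgen : Subgroup.closure ({h, b} : Set G) = ⊤)
    (hh : orderOf h = q ^ 2 - 1)
    (hb : orderOf b = 2)
    (hrel : b * h * b⁻¹ = h ^ q)
    (g : G) (hg : g = h ^ ((q - 1) / 2) * b) :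
    Subgroup.centralizer {g} = Subgroup.closure {g, h ^ (q + 1)} ∧
    Nat.card {x : G // IsConj g x} = q + 1 ∧
    (∀ x : G, IsConj g x ↔ ((∃ i : ℤ, x = h ^ i * b) ∧ orderOf x = 4)) := by
  have hqz3 : (3:ℤ) ≤ (q:ℤ) := by exact_mod_cast hq3
  set M : ℤ := (((q - 1) / 2 : ℕ) : ℤ) with hMdef
  have hM : 2 * M = (q:ℤ) - 1 := by
    have h2 : q % 2 = 1 := Nat.odd_iff.mp hqodd
    simp only [hMdef]
    omega
  have hM1 : 1 ≤ M := by omega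
  -- basic facts about b
  have hb2 : b * b = 1 := by
    have := pow_orderOf_eq_one b
    rwa [hb, pow_two] at this
  have hbi : b⁻¹ = b := by
    rw [inv_eq_iff_mul_eq_one]; exact hb2
  -- exponent lemma
  have hE : ∀ i j : ℤ, h ^ i = h ^ j ↔ ((q:ℤ) ^ 2 - 1) ∣ (i - j) := by
    intro i j
    rw [← orderOf_dvd_sub_iff_zpow_eq_zpow, hh]
    have h1 : (1:ℕ) ≤ q ^ 2 := by nlinarith
    push_cast [h1]
    rfl
  have hQ : ((q:ℤ) ^ 2 - 1) = ((q:ℤ) - 1) * ((q:ℤ) + 1) := by ring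
  have hQ' : ((q:ℤ) ^ 2 - 1) = ((q:ℤ) + 1) * ((q:ℤ) - 1) := by ring
  have hqm1 : ((q:ℤ) - 1) ≠ 0 := by omega
  have hqp1 : ((q:ℤ) + 1) ≠ 0 := by omega
  have cancel1 : ∀ a : ℤ, ((q:ℤ) ^ 2 - 1) ∣ ((q:ℤ) - 1) * a → ((q:ℤ) + 1) ∣ a := by
    intro a ha; rw [hQ] at ha; exact (mul_dvd_mul_iff_left hqm1).mp ha
  have cancel2 : ∀ a : ℤ, ((q:ℤ) ^ 2 - 1) ∣ ((q:ℤ) + 1) * a → ((q:ℤ) - 1) ∣ a := by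
    intro a ha; rw [hQ'] at ha; exact (mul_dvd_mul_iff_left hqp1).mp ha
  -- conjugation by b
  have hbh : ∀ j : ℤ, b * h ^ j = h ^ ((q:ℤ) * j) * b := by
    intro j
    have h1 : b * h ^ j * b⁻¹ = h ^ ((q:ℤ) * j) := by
      rw [← conj_zpow, hrel, ← zpow_natCast h q, ← zpow_mul]
    rw [← h1, hbi, mul_assoc, hb2, mul_one]
  -- multiplication normal forms
  have k1 : ∀ i j : ℤ, h ^ i * (h ^ j * b) = h ^ (i + j) * b := by
    intro i j; rw [← mul_assoc, ← zpow_add]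
  have k2 : ∀ i j : ℤ, (h ^ i * b) * h ^ j = h ^ (i + (q:ℤ) * j) * b := by
    intro i j; rw [mul_assoc, hbh, ← mul_assoc, ← zpow_add]
  have k3 : ∀ i j : ℤ, (h ^ i * b) * (h ^ j * b) = h ^ (i + (q:ℤ) * j) := by
    intro i j; rw [← mul_assoc, k2, mul_assoc, hb2, mul_one]
  have k4 : ∀ i : ℤ, (h ^ i * b)⁻¹ = h ^ (-((q:ℤ) * i)) * b := by
    intro i
    refine inv_eq_of_mul_eq_one_right ?_
    rw [k3]
    rw [show i + (q:ℤ) * -((q:ℤ) * i) = -(((q:ℤ)^2 - 1) * i) by ring]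
    rw [show (1:G) = h ^ (0:ℤ) by simp, hE]
    exact ⟨-i, by ring⟩
  have hgz : g = h ^ M * b := by rw [hg, hMdef, zpow_natCast]
  -- b is not a power of h
  have hrelz : b * h * b⁻¹ = h ^ ((q:ℤ)) := by rw [hrel, zpow_natCast]
  have hbne : ∀ i j : ℤ, h ^ i ≠ h ^ j * b := by
    intro i j hij
    have hbh' : b = h ^ (-j + i) := by rw [zpow_add, hij]; group
    have : h ^ ((q:ℤ)) = h ^ (1:ℤ) := by
      rw [← hrelz, hbh', zpow_one]
      group
    rw [hE] at this
    have hpos : (0:ℤ) < (q:ℤ) - 1 := by omega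
    have := Int.le_of_dvd hpos this
    nlinarith
  -- decomposition of G
  have hdec : ∀ x : G, (∃ i : ℤ, x = h ^ i) ∨ (∃ i : ℤ, x = h ^ i * b) := by
    intro x
    have hx : x ∈ Subgroup.closure ({h, b} : Set G) := by rw [hgen]; trivial
    refine Subgroup.closure_induction ?_ ?_ ?_ ?_ hx
    · rintro y (rfl | rfl)
      · exact Or.inl ⟨1, (zpow_one _).symm⟩
      · exact Or.inr ⟨0, by rw [zpow_zero, one_mul]⟩
    · exact Or.inl ⟨0, (zpow_zero _).symm⟩
    · rintro x y _ _ (⟨i, rfl⟩ | ⟨i, rfl⟩) (⟨j, rfl⟩ | ⟨j, rfl⟩)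
      · exact Or.inl ⟨i + j, (zpow_add _ _ _).symm⟩
      · exact Or.inr ⟨i + j, (k1 i j).symm ▸ rfl⟩
      · exact Or.inr ⟨i + (q:ℤ) * j, (k2 i j).symm ▸ rfl⟩
      · exact Or.inl ⟨i + (q:ℤ) * j, (k3 i j).symm ▸ rfl⟩
    · rintro x _ (⟨i, rfl⟩ | ⟨i, rfl⟩)
      · exact Or.inl ⟨-i, (zpow_neg _ _).symm⟩
      · exact Or.inr ⟨-((q:ℤ) * i), k4 i⟩
  -- conjugation formulas
  have cj1 : ∀ j : ℤ, h ^ j * g * (h ^ j)⁻¹ = h ^ (M + ((q:ℤ) - 1) * (-j)) * b := by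
    intro j
    rw [hgz, ← zpow_neg, k1, k2]
    congr 2
    ring
  have cj2 : ∀ j : ℤ, (h ^ j * b) * g * (h ^ j * b)⁻¹ = h ^ (M + ((q:ℤ) - 1) * (M - j)) * b := by
    intro j
    rw [hgz, k3, k4, k1]
    congr 2
    ring
  have hclass2 : ∀ t : ℤ, IsConj g (h ^ (M + ((q:ℤ) - 1) * t) * b) := by
    intro t
    rw [isConj_iff]
    exact ⟨h ^ (-t), by rw [cj1, neg_neg]⟩
  have hclass1 : ∀ x : G, IsConj g x → ∃ t : ℤ, x = h ^ (M + ((q:ℤ) - 1) * t) * b := by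
    intro x hx
    rw [isConj_iff] at hx
    obtain ⟨c, hc⟩ := hx
    rcases hdec c with ⟨j, rfl⟩ | ⟨j, rfl⟩
    · exact ⟨-j, by rw [← hc, cj1]⟩
    · exact ⟨M - j, by rw [← hc, cj2]⟩
  -- order 4 criterion
  have ordlem : ∀ x : G, x ^ 2 ≠ 1 → x ^ 4 = 1 → orderOf x = 4 := by
    intro x h2 h4
    have hd : orderOf x ∣ 4 := orderOf_dvd_of_pow_eq_one h4
    have hnd : ¬ orderOf x ∣ 2 := fun hdd => h2 (orderOf_dvd_iff_pow_eq_one.mp hdd)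
    have hle : orderOf x ≤ 4 := Nat.le_of_dvd (by norm_num) hd
    interval_cases (orderOf x) <;> revert hd hnd <;> decide
  -- squares in the coset
  have hsq : ∀ i : ℤ, (h ^ i * b) ^ 2 = h ^ (((q:ℤ) + 1) * i) := by
    intro i
    rw [pow_two, k3]
    congr 1
    ring
  have h2QM : 2 * (((q:ℤ) + 1) * M) = (q:ℤ) ^ 2 - 1 := by
    have : ((q:ℤ) + 1) * (2 * M) = ((q:ℤ) + 1) * ((q:ℤ) - 1) := by rw [hM]
    linarith [this]
  have hQpos : (0:ℤ) < (q:ℤ) ^ 2 - 1 := by nlinarith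
  have hQMnd : ¬ ((q:ℤ) ^ 2 - 1) ∣ ((q:ℤ) + 1) * M := by
    intro hdvd
    have hpos : (0:ℤ) < ((q:ℤ) + 1) * M := by nlinarith
    have := Int.le_of_dvd hpos hdvd
    linarith
  have hone : ∀ e : ℤ, h ^ e = 1 ↔ ((q:ℤ) ^ 2 - 1) ∣ e := by
    intro e
    rw [show (1:G) = h ^ (0:ℤ) by simp, hE, sub_zero]
  -- Goal 3
  have goal3 : ∀ x : G, IsConj g x ↔ ((∃ i : ℤ, x = h ^ i * b) ∧ orderOf x = 4) := by
    intro x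
    constructor
    · intro hx
      obtain ⟨t, rfl⟩ := hclass1 x hx
      refine ⟨⟨_, rfl⟩, ordlem _ ?_ ?_⟩
      · rw [hsq]
        simp only [ne_eq, hone]
        intro hdvd
        have : ((q:ℤ) ^ 2 - 1) ∣ ((q:ℤ) + 1) * M := by
          have h5 : ((q:ℤ) + 1) * (M + ((q:ℤ) - 1) * t) =
              ((q:ℤ) ^ 2 - 1) * t + ((q:ℤ) + 1) * M := by ring
          rw [h5] at hdvd
          exact (dvd_add_right ⟨t, rfl⟩).mp hdvd
        exact hQMnd this
      · rw [show (4:ℕ) = 2 * 2 by norm_num, pow_mul, hsq, ← zpow_natCast, ← zpow_mul]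
        rw [hone]
        exact ⟨1 + 2 * t, by push_cast; linarith [h2QM]⟩
    · rintro ⟨⟨i, rfl⟩, h4⟩
      have hx4 : (h ^ i * b) ^ 4 = 1 := by rw [← h4]; exact pow_orderOf_eq_one _
      have hx2 : (h ^ i * b) ^ 2 ≠ 1 := by
        intro h2
        have : orderOf (h ^ i * b) ∣ 2 := orderOf_dvd_of_pow_eq_one h2
        rw [h4] at this
        norm_num at this
      rw [hsq] at hx2
      simp only [ne_eq, hone] at hx2
      rw [show (4:ℕ) = 2 * 2 by norm_num, pow_mul, hsq, ← zpow_natCast, ← zpow_mul, hone] at hx4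
      have hdvd2i : ((q:ℤ) - 1) ∣ 2 * i := by
        apply cancel2
        have : ((q:ℤ) + 1) * (2 * i) = ((q:ℤ) + 1) * i * 2 := by ring
        rw [this]
        exact_mod_cast hx4
      have hndi : ¬ ((q:ℤ) - 1) ∣ i := by
        intro ⟨c, hc⟩
        exact hx2 ⟨c, by rw [hQ, hc]; ring⟩
      obtain ⟨s, hs⟩ := hdvd2i
      have his : i = M * s := by
        have : 2 * i = 2 * (M * s) := by rw [hs, ← hM]; ring
        omega
      rcases Int.even_or_odd s with ⟨u, hu⟩ | ⟨u, hu⟩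
      · exfalso
        exact hndi ⟨u, by rw [his, hu, ← hM]; ring⟩
      · have : i = M + ((q:ℤ) - 1) * u := by rw [his, hu, ← hM]; ring
        rw [this]
        exact hclass2 u
  refine ⟨?_, ?_, goal3⟩
  · -- centralizer
    have hnat : (h : G) ^ (q + 1) = h ^ ((q:ℤ) + 1) := by
      rw [← zpow_natCast]; push_cast; ring_nf
    have memh : h ^ (q + 1) ∈ Subgroup.centralizer {g} := by
      rw [Subgroup.mem_centralizer_singleton_iff, hnat, hgz, k1, k2]
      have : h ^ ((q:ℤ) + 1 + M) = h ^ (M + (q:ℤ) * ((q:ℤ) + 1)) := by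
        rw [hE]; exact ⟨-1, by ring⟩
      rw [this]
    apply le_antisymm
    · intro x hx
      have hcx := Subgroup.mem_centralizer_singleton_iff.mp hx
      rcases hdec x with ⟨i, rfl⟩ | ⟨i, rfl⟩
      · rw [hgz, k1, k2] at hcx
        have := mul_right_cancel hcx
        rw [hE] at this
        have hd : ((q:ℤ) + 1) ∣ i := by
          apply cancel1
          have h5 : ((q:ℤ) - 1) * i = -((i + M) - (M + (q:ℤ) * i)) := by ring
          rw [h5]
          exact dvd_neg.mpr this
        obtain ⟨c, hc⟩ := hd
        have : h ^ i = (h ^ (q + 1)) ^ c := by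
          rw [hnat, ← zpow_mul, hc]
        rw [this]
        exact Subgroup.zpow_mem _ (Subgroup.subset_closure (by simp)) c
      · rw [hgz, k3, k3] at hcx
        rw [hE] at hcx
        have hd : ((q:ℤ) + 1) ∣ (i - M) := by
          apply cancel1
          have h5 : ((q:ℤ) - 1) * (i - M) = -((i + (q:ℤ) * M) - (M + (q:ℤ) * i)) := by ring
          rw [h5]
          exact dvd_neg.mpr hcx
        obtain ⟨c, hc⟩ := hd
        have hxeq : h ^ i * b = (h ^ (q + 1)) ^ c * g := by
          rw [hnat, ← zpow_mul, hgz, k1]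
          congr 2
          omega
        rw [hxeq]
        exact Subgroup.mul_mem _
          (Subgroup.zpow_mem _ (Subgroup.subset_closure (by simp)) c)
          (Subgroup.subset_closure (by simp))
    · rw [Subgroup.closure_le]
      rintro y (rfl | rfl)
      · exact Subgroup.mem_centralizer_singleton_iff.mpr rfl
      · exact memh
  · -- cardinality
    haveI : NeZero (q + 1) := ⟨by omega⟩
    have valcast : ∀ t : ZMod (q + 1), ((t.val : ℤ) : ZMod (q + 1)) = t := by
      intro t
      push_cast
      exact ZMod.natCast_rightInverse t
    set f : ZMod (q + 1) → {x : G // IsConj g x} :=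
      fun t => ⟨h ^ (M + ((q:ℤ) - 1) * (t.val : ℤ)) * b, hclass2 _⟩ with hf
    have hinj : Function.Injective f := by
      intro t s hts
      have h1 : h ^ (M + ((q:ℤ) - 1) * (t.val : ℤ)) * b
          = h ^ (M + ((q:ℤ) - 1) * (s.val : ℤ)) * b := congrArg Subtype.val hts
      have h2 := mul_right_cancel h1
      rw [hE] at h2
      have hd : ((q:ℤ) + 1) ∣ ((t.val : ℤ) - (s.val : ℤ)) := by
        apply cancel1
        have h5 : ((q:ℤ) - 1) * ((t.val : ℤ) - (s.val : ℤ)) =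
            (M + ((q:ℤ) - 1) * (t.val : ℤ)) - (M + ((q:ℤ) - 1) * (s.val : ℤ)) := by ring
        rw [h5]; exact h2
      have : ((t.val : ℤ) : ZMod (q + 1)) = ((s.val : ℤ) : ZMod (q + 1)) := by
        rw [ZMod.intCast_eq_intCast_iff]
        apply Int.modEq_iff_dvd.mpr
        push_cast
        exact dvd_sub_comm.mp hd
      rwa [valcast, valcast] at this
    have hsurj : Function.Surjective f := by
      rintro ⟨x, hx⟩
      obtain ⟨t, rfl⟩ := hclass1 x hx
      refine ⟨((t : ZMod (q + 1))), ?_⟩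
      apply Subtype.ext
      show h ^ (M + ((q:ℤ) - 1) * (((t : ZMod (q + 1)).val : ℤ))) * b
          = h ^ (M + ((q:ℤ) - 1) * t) * b
      have hd : ((q:ℤ) + 1) ∣ ((((t : ZMod (q + 1)).val : ℤ)) - t) := by
        have hcasts : ((((t : ZMod (q + 1)).val : ℤ)) : ZMod (q + 1)) = ((t : ZMod (q + 1))) :=
          valcast _
        have := (ZMod.intCast_eq_intCast_iff _ _ _).mp (by rw [hcasts] :
          ((((t : ZMod (q + 1)).val : ℤ)) : ZMod (q + 1)) = ((t : ℤ) : ZMod (q + 1)))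
        have h6 := Int.ModEq.dvd this
        have h7 : ((q + 1 : ℕ) : ℤ) = (q:ℤ) + 1 := by push_cast; ring
        rw [h7] at h6
        exact dvd_neg.mp (by rw [neg_sub]; exact h6)
      congr 1
      rw [hE, hQ]
      obtain ⟨c, hc⟩ := hd
      have h8 : M + ((q:ℤ) - 1) * (((t : ZMod (q + 1)).val : ℤ)) - (M + ((q:ℤ) - 1) * t)
          = ((q:ℤ) - 1) * ((((t : ZMod (q + 1)).val : ℤ)) - t) := by ring
      rw [h8, hc]
      exact ⟨c, by ring⟩
    rw [← Nat.card_zmod (q + 1)]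
    exact (Nat.card_congr (Equiv.ofBijective f ⟨hinj, hsurj⟩)).symm

/-- In the abstract model `N = ⟨h⟩ ⋊ ⟨b⟩` of the normalizer of a Singer cycle of
`GL(2,q)` (with `orderOf h = q² - 1`, `orderOf b = 2`, `b h b⁻¹ = h^q`), assume `p`
is odd and let `g = h^((q-1)/2) * b`. Then the centralizer of `g` in `N` is the
subgroup generated by `g` and `h^(q+1)`, the conjugacy class of `g` has exactly
`q + 1` elements, and this class is precisely the set of elements of order 4 in the
coset `⟨h⟩b`. -/
theorem singer_normalizer_order_four_class
    (p k₀ : ℕ) (hp : p.Prime) (hodd : Odd p) (hk₀ : 1 ≤ k₀)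
    (G : Type) [Group G] (h b : G)
    (hgen : Subgroup.closure ({h, b} : Set G) = ⊤)
    (hh : orderOf h = (p ^ k₀) ^ 2 - 1)
    (hb : orderOf b = 2)
    (hrel : b * h * b⁻¹ = h ^ (p ^ k₀))
    (g : G) (hg : g = h ^ ((p ^ k₀ - 1) / 2) * b) :
    Subgroup.centralizer {g} = Subgroup.closure {g, h ^ (p ^ k₀ + 1)} ∧
    Nat.card {x : G // IsConj g x} = p ^ k₀ + 1 ∧
    (∀ x : G, IsConj g x ↔ ((∃ i : ℤ, x = h ^ i * b) ∧ orderOf x = 4)) := by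
  have hp3 : 3 ≤ p := by
    rcases hp.two_le.lt_or_eq with h1 | h1
    · omega
    · exfalso; rw [← h1] at hodd; exact (Nat.not_odd_iff_even.mpr even_two) hodd
  have hq3 : 3 ≤ p ^ k₀ := le_trans hp3 (Nat.le_self_pow (by omega) p)
  exact singer_aux (p ^ k₀) hq3 (hodd.pow) G h b hgen hh hb hrel g hg
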